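/- Let K be a normed cone such that ‖x+y‖ ≥ ‖x‖ for all x,y∈K. Then every SαS random element ξ with ξ∈E almost surely (i.e. 0 < ‖ξ‖ < ∞ almost surely) has characteristic exponent α > 0. -/

import Mathlib

open Filter Topology MeasureTheory
open scoped ENNReal

/-- Let `K` be a normed cone (pointed convex cone with extended metric
homogeneous at the origin `o`, norm `‖x‖ = edist x o`) such that `‖x + y‖ ≥ ‖x‖` for
all `x, y ∈ K`.  Then every strictly `α`-stable random element `ξ` with `ξ ∈ E`
almost surely (i.e. `0 < ‖ξ‖ < ∞` a.s.) has characteristic exponent `α > 0`.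
Lean's `0 : K` is the neutral element `e`. -/
theorem SaS_exponent_positive_of_norm_increasing
    {K : Type*} [EMetricSpace K] [CompleteSpace K] [SecondCountableTopology K]
    [AddCommMonoid K] [SMul ℝ K] [MeasurableSpace K] [BorelSpace K]
    (hadd_cont : Continuous fun p : K × K => p.1 + p.2)
    (hsmul_cont : ContinuousOn (fun p : ℝ × K => p.1 • p.2)
      (Set.Ioi (0 : ℝ) ×ˢ (Set.univ : Set K)))
    (hsmul_add : ∀ a : ℝ, 0 < a → ∀ x y : K, a • (x + y) = a • x + a • y)
    (hsmul_assoc : ∀ a b : ℝ, 0 < a → 0 < b → ∀ x : K, a • (b • x) = (a * b) • x)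
    (hone_smul : ∀ x : K, (1 : ℝ) • x = x)
    (hsmul_e : ∀ a : ℝ, 0 < a → a • (0 : K) = (0 : K))
    (o : K)
    (horigin : ∀ x : K, x ≠ 0 →
      Tendsto (fun a : ℝ => a • x) (𝓝[>] (0 : ℝ)) (𝓝 o))
    (hhom : ∀ a : ℝ, 0 < a → ∀ x : K, edist (a • x) o = ENNReal.ofReal a * edist x o)
    (hmono : ∀ x y : K, edist x o ≤ edist (x + y) o)
    {Ω : Type*} [MeasurableSpace Ω] (μ : Measure Ω) [IsProbabilityMeasure μ]
    (ξ : Ω → K) (hξmeas : Measurable ξ)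
    (hξE : ∀ᵐ ω ∂μ, 0 < edist (ξ ω) o ∧ edist (ξ ω) o < ⊤)
    (α : ℝ) (hα : α ≠ 0)
    (hSaS : ∀ a b : ℝ, 0 < a → 0 < b →
      Measure.map (fun p : K × K => (a ^ (1 / α)) • p.1 + (b ^ (1 / α)) • p.2)
          ((μ.map ξ).prod (μ.map ξ)) =
        Measure.map (fun x : K => ((a + b) ^ (1 / α)) • x) (μ.map ξ)) :
    0 < α := by
  by_contra hpos
  push_neg at hpos
  have hαlt : α < 0 := lt_of_le_of_ne hpos hα
  set r : ℝ := (2 : ℝ) ^ (1 / α) with hr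
  have hrpos : 0 < r := Real.rpow_pos_of_pos two_pos _
  have hrlt1 : r < 1 :=
    Real.rpow_lt_one_of_one_lt_of_neg one_lt_two (div_neg_of_pos_of_neg one_pos hαlt)
  have hsc : ∀ a : ℝ, 0 < a → Continuous fun x : K => a • x := by
    intro a ha
    rw [continuous_iff_continuousAt]
    intro x
    have hopen : IsOpen (Set.Ioi (0 : ℝ) ×ˢ (Set.univ : Set K)) :=
      isOpen_Ioi.prod isOpen_univ
    have h1 : ContinuousAt (fun p : ℝ × K => p.1 • p.2) (a, x) :=
      hsmul_cont.continuousAt (hopen.mem_nhds ⟨ha, trivial⟩)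
    exact h1.comp ((continuous_const.prodMk continuous_id).continuousAt)
  set ν : Measure K := μ.map ξ with hν
  have hνprob : IsProbabilityMeasure ν := Measure.isProbabilityMeasure_map hξmeas.aemeasurable
  set S : ℝ≥0∞ → Set K := fun t => {x : K | t < edist x o} with hS
  have hnorm : Continuous fun x : K => edist x o := continuous_id.edist continuous_const
  have hSmeas : ∀ t, MeasurableSet (S t) := fun t =>
    hnorm.measurable measurableSet_Ioi
  set c : ℝ≥0∞ := ENNReal.ofReal r with hc
  have hc0 : c ≠ 0 := (ENNReal.ofReal_pos.2 hrpos).ne'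
  have hctop : c ≠ ⊤ := ENNReal.ofReal_ne_top
  have hclt1 : c < 1 := by
    rw [hc, ← ENNReal.ofReal_one]
    exact (ENNReal.ofReal_lt_ofReal_iff one_pos).2 hrlt1
  set d : ℝ≥0∞ := c⁻¹ with hd
  have hd1 : 1 < d := ENNReal.one_lt_inv.2 hclt1
  have hdtop : d ≠ ⊤ := ENNReal.inv_ne_top.2 hc0
  have hd0 : d ≠ 0 := ENNReal.inv_ne_zero.2 hctop
  have h := hSaS 1 1 one_pos one_pos
  simp only [Real.one_rpow, hone_smul, one_add_one_eq_two] at h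
  have key : ∀ t : ℝ≥0∞, ν (S t) ≤ ν (S (t * d)) := by
    intro t
    calc ν (S t) = ν (S t) * ν Set.univ := by rw [measure_univ, mul_one]
      _ = (ν.prod ν) (S t ×ˢ Set.univ) := (Measure.prod_prod _ _).symm
      _ ≤ (ν.prod ν) ((fun p : K × K => p.1 + p.2) ⁻¹' S t) := by
          refine measure_mono ?_
          rintro ⟨x, y⟩ ⟨hx, -⟩
          exact lt_of_lt_of_le hx (hmono x y)
      _ = Measure.map (fun p : K × K => p.1 + p.2) (ν.prod ν) (S t) :=
          (Measure.map_apply hadd_cont.measurable (hSmeas t)).symm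
      _ = Measure.map (fun x : K => r • x) ν (S t) := by rw [h]
      _ = ν ((fun x : K => r • x) ⁻¹' S t) :=
          Measure.map_apply (hsc r hrpos).measurable (hSmeas t)
      _ ≤ ν (S (t * d)) := by
          refine measure_mono ?_
          intro x hx
          have hx' : t < c * edist x o := by
            have h0 := hx
            simpa [hS, hhom r hrpos x, hc] using h0
          have h2 : t * c⁻¹ < (c * edist x o) * c⁻¹ :=
            (ENNReal.mul_lt_mul_iff_left (ENNReal.inv_ne_zero.2 hctop)
              (ENNReal.inv_ne_top.2 hc0)).2 hx'
          have h3 : (c * edist x o) * c⁻¹ = edist x o := by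
            rw [mul_comm c, mul_assoc, ENNReal.mul_inv_cancel hc0 hctop, mul_one]
          rw [h3] at h2
          exact h2
  have iter : ∀ (t : ℝ≥0∞) (n : ℕ), ν (S t) ≤ ν (S (t * d ^ n)) := by
    intro t n
    induction n with
    | zero => simp
    | succ n ih =>
        calc ν (S t) ≤ ν (S (t * d ^ n)) := ih
          _ ≤ ν (S (t * d ^ n * d)) := key _
          _ = ν (S (t * d ^ (n + 1))) := by rw [pow_succ, ← mul_assoc]
  have hae := hξE
  rw [ae_iff] at hae
  have htopset : MeasurableSet {x : K | edist x o = ⊤} :=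
    hnorm.measurable (measurableSet_singleton ⊤)
  have htop : ν {x : K | edist x o = ⊤} = 0 := by
    rw [hν, Measure.map_apply hξmeas htopset]
    refine measure_mono_null ?_ hae
    intro ω hω
    have hω' : edist (ξ ω) o = ⊤ := hω
    exact fun hcon => hcon.2.ne hω' 
  have hzeroset : MeasurableSet {x : K | edist x o = 0} :=
    hnorm.measurable (measurableSet_singleton 0)
  have hzero : ν {x : K | edist x o = 0} = 0 := by
    rw [hν, Measure.map_apply hξmeas hzeroset]
    refine measure_mono_null ?_ hae
    intro ω hω
    have hω' : edist (ξ ω) o = 0 := hω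
    exact fun hcon => hcon.1.ne' hω' 
  have tail0 : ∀ t : ℝ≥0∞, t ≠ 0 → t ≠ ⊤ → ν (S t) = 0 := by
    intro t ht httop
    have hanti : Antitone fun n : ℕ => S (t * d ^ n) := by
      intro m n hmn x hx
      have hle : t * d ^ m ≤ t * d ^ n :=
        mul_le_mul_right (pow_le_pow_right₀ hd1.le hmn) t
      exact lt_of_le_of_lt hle hx
    have hd1R : 1 < d.toReal := by
      rw [← ENNReal.toReal_one]
      exact (ENNReal.toReal_lt_toReal ENNReal.one_ne_top hdtop).2 hd1
    have hInter : (⋂ n, S (t * d ^ n)) ⊆ {x : K | edist x o = ⊤} := by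
      intro x hx
      by_contra hne
      have hfd : edist x o / t ≠ ⊤ := (ENNReal.div_lt_top hne ht).ne
      obtain ⟨n, hn⟩ := pow_unbounded_of_one_lt ((edist x o / t).toReal) hd1R
      have hpow : (d ^ n : ℝ≥0∞) ≠ ⊤ := ENNReal.pow_ne_top hdtop
      have hlt' : edist x o / t < d ^ n := by
        rw [← ENNReal.toReal_lt_toReal hfd hpow, ENNReal.toReal_pow]
        exact hn
      have hlt : edist x o < d ^ n * t :=
        (ENNReal.div_lt_iff (Or.inl ht) (Or.inl httop)).1 hlt'
      have hmem : t * d ^ n < edist x o := Set.mem_iInter.1 hx n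
      rw [mul_comm] at hlt
      exact absurd (hmem.trans hlt) (lt_irrefl _)
    have htend := MeasureTheory.tendsto_measure_iInter_atTop (μ := ν)
      (fun n => (hSmeas _).nullMeasurableSet) hanti ⟨0, measure_ne_top ν _⟩
    have hI : ν (⋂ n, S (t * d ^ n)) = 0 :=
      le_antisymm ((measure_mono hInter).trans htop.le) (zero_le)
    rw [hI] at htend
    have hle0 : ν (S t) ≤ 0 := ge_of_tendsto' htend fun n => iter t n
    exact le_antisymm hle0 (zero_le)
  have tails : ∀ n : ℕ, ν (S ((n : ℝ≥0∞))⁻¹) = 0 := by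
    intro n
    rcases Nat.eq_zero_or_pos n with h0 | hp
    · subst h0
      have hempty : S (((0 : ℕ) : ℝ≥0∞))⁻¹ = ∅ := by
        ext x
        simp [hS]
      rw [hempty, measure_empty]
    · refine tail0 _ (ENNReal.inv_ne_zero.2 (ENNReal.natCast_ne_top n)) ?_
      rw [Ne, ENNReal.inv_eq_top]
      exact_mod_cast hp.ne'
  have hcover : (Set.univ : Set K) ⊆
      {x : K | edist x o = 0} ∪ ⋃ n : ℕ, S ((n : ℝ≥0∞))⁻¹ := by
    intro x _
    by_cases hx : edist x o = 0
    · exact Or.inl hx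
    · obtain ⟨n, hn⟩ := ENNReal.exists_inv_nat_lt hx
      exact Or.inr (Set.mem_iUnion.2 ⟨n, hn⟩)
  have hcontra : (1 : ℝ≥0∞) ≤ 0 := by
    calc (1 : ℝ≥0∞) = ν Set.univ := measure_univ.symm
      _ ≤ ν ({x : K | edist x o = 0} ∪ ⋃ n : ℕ, S ((n : ℝ≥0∞))⁻¹) := measure_mono hcover
      _ ≤ ν {x : K | edist x o = 0} + ν (⋃ n : ℕ, S ((n : ℝ≥0∞))⁻¹) := measure_union_le _ _
      _ = 0 := by rw [hzero, measure_iUnion_null tails, add_zero]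
  exact absurd hcontra (by simp)
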